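/- Fix an integer n ≥ 1 and an even integer λ ≥ 2 with 1 + λ − n ≥ 0, set m = 1 + λ/2, and fix ρ > 0, b₀ > 0, σ > 0 and δ > 0 with δ < b₀/(2(m+1)). Let MN_E be the function (10): MN_E(c) = √(8ρ) c^{(λ−n−1)/4} S(c) (2/3)^{c/(24ρδ)} for 0 < c ≤ c₁ := 12ρb₀ and MN_E(c) = √(2/(3b₀)) c^{(1+λ−n)/4} S(c) (2/3)^{b₀/(2δ)} for c ≥ c₁, where S(c) := sup_{ξ ∈ ℝⁿ} |ξ|^{(1+n+λ)/4} exp(c|ξ|/2 − |ξ|²/(2σ)). Then MN_E is nondecreasing on [c₁, ∞), and there exists c* ∈ [c₀, c₁], where c₀ := 24ρ(m+1)δ, such that MN_E(c*) ≤ MN_E(c) for all c ∈ [c₀, ∞). -/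

import Mathlib

open Real

lemma aux_bdd (n : ℕ) (p σ c : ℝ) (hp : 0 ≤ p) (hσ : 0 < σ) :
    BddAbove (Set.range fun ξ : EuclideanSpace ℝ (Fin n) =>
      ‖ξ‖ ^ p * Real.exp (c * ‖ξ‖ / 2 - ‖ξ‖ ^ 2 / (2 * σ))) := by
  refine ⟨Real.exp (σ * (p + c / 2) ^ 2 / 2), ?_⟩
  rintro x ⟨ξ, rfl⟩
  have hr : (0 : ℝ) ≤ ‖ξ‖ := norm_nonneg _
  set r := ‖ξ‖ with hrdef
  have h1 : r ^ p ≤ Real.exp (r * p) := by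
    rw [Real.exp_mul]
    exact Real.rpow_le_rpow hr (by linarith [Real.add_one_le_exp r]) hp
  have ht : r ^ 2 / (2 * σ) * (2 * σ) = r ^ 2 := div_mul_cancel₀ _ (by positivity)
  calc r ^ p * Real.exp (c * r / 2 - r ^ 2 / (2 * σ))
      ≤ Real.exp (r * p) * Real.exp (c * r / 2 - r ^ 2 / (2 * σ)) :=
        mul_le_mul_of_nonneg_right h1 (Real.exp_nonneg _)
    _ = Real.exp (r * p + (c * r / 2 - r ^ 2 / (2 * σ))) := (Real.exp_add _ _).symm
    _ ≤ Real.exp (σ * (p + c / 2) ^ 2 / 2) := by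
        apply Real.exp_le_exp.2
        nlinarith [sq_nonneg (r - σ * (p + c / 2)), ht, hσ, sq_nonneg r]

/-- Case 1 of Section 3.1.2: for `1 + λ − n ≥ 0`, the MN function (10) for
functions of class `E_σ` is nondecreasing on `[c₁, ∞)`, and there exists
`c* ∈ [c₀, c₁]` minimizing it over `[c₀, ∞)`. -/
theorem MN_case1_Esigma (n lam : ℕ) (hn : 1 ≤ n) (hlam : 2 ≤ lam) (hlame : Even lam)
    (hln : (0 : ℝ) ≤ 1 + (lam : ℝ) - n)
    (m : ℕ) (hm : m = 1 + lam / 2)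
    (ρ b₀ σ δ : ℝ) (hρ : 0 < ρ) (hb₀ : 0 < b₀) (hσ : 0 < σ) (hδ : 0 < δ)
    (hδb : δ < b₀ / (2 * ((m : ℝ) + 1)))
    (c₀ c₁ : ℝ) (hc₀ : c₀ = 24 * ρ * ((m : ℝ) + 1) * δ) (hc₁ : c₁ = 12 * ρ * b₀)
    (S : ℝ → ℝ)
    (hS : ∀ c : ℝ, S c = ⨆ ξ : EuclideanSpace ℝ (Fin n),
      ‖ξ‖ ^ ((1 + (n : ℝ) + (lam : ℝ)) / 4) * exp (c * ‖ξ‖ / 2 - ‖ξ‖ ^ 2 / (2 * σ)))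
    (MN : ℝ → ℝ)
    (hMN1 : ∀ c : ℝ, 0 < c → c ≤ c₁ →
      MN c = Real.sqrt (8 * ρ) * c ^ (((lam : ℝ) - n - 1) / 4) * S c *
        ((2 : ℝ) / 3) ^ (c / (24 * ρ * δ)))
    (hMN2 : ∀ c : ℝ, c₁ ≤ c →
      MN c = Real.sqrt (2 / (3 * b₀)) * c ^ ((1 + (lam : ℝ) - n) / 4) * S c *
        ((2 : ℝ) / 3) ^ (b₀ / (2 * δ))) :
    MonotoneOn MN (Set.Ici c₁) ∧
    ∃ cstar ∈ Set.Icc c₀ c₁, ∀ c ∈ Set.Ici c₀, MN cstar ≤ MN c := by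
  set p : ℝ := (1 + (n : ℝ) + (lam : ℝ)) / 4 with hpdef
  have hp : 0 < p := by positivity
  set F : ℝ → EuclideanSpace ℝ (Fin n) → ℝ :=
    fun c ξ => ‖ξ‖ ^ p * Real.exp (c * ‖ξ‖ / 2 - ‖ξ‖ ^ 2 / (2 * σ)) with hFdef
  have hSF : ∀ c, S c = ⨆ ξ, F c ξ := hS
  have hbdd : ∀ c, BddAbove (Set.range (F c)) := fun c => aux_bdd n p σ c hp.le hσ
  -- S is nonnegative
  have hSnn : ∀ c, 0 ≤ S c := by
    intro c
    have h0 : F c 0 = 0 := by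
      simp [hFdef, Real.zero_rpow (ne_of_gt hp)]
    rw [hSF c]
    calc (0 : ℝ) = F c 0 := h0.symm
      _ ≤ ⨆ ξ, F c ξ := le_ciSup (hbdd c) 0
  -- S is monotone
  have hSmono : Monotone S := by
    intro a b hab
    rw [hSF a, hSF b]
    refine ciSup_le fun ξ => le_ciSup_of_le (hbdd b) ξ ?_
    exact mul_le_mul_of_nonneg_left
      (Real.exp_le_exp.2 (by nlinarith [norm_nonneg ξ])) (by positivity)
  -- S is convex, hence continuous
  have hSconv : ConvexOn ℝ Set.univ S := by
    refine ⟨convex_univ, fun a _ b _ ta tb hta htb hab => ?_⟩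
    simp only [smul_eq_mul]
    rw [hSF, hSF, hSF]
    refine ciSup_le fun ξ => ?_
    have hx : (ta * a + tb * b) * ‖ξ‖ / 2 - ‖ξ‖ ^ 2 / (2 * σ) =
        ta * (a * ‖ξ‖ / 2 - ‖ξ‖ ^ 2 / (2 * σ)) + tb * (b * ‖ξ‖ / 2 - ‖ξ‖ ^ 2 / (2 * σ)) := by
      linear_combination (‖ξ‖ ^ 2 / (2 * σ)) * hab
    have hexp := convexOn_exp.2 (Set.mem_univ (a * ‖ξ‖ / 2 - ‖ξ‖ ^ 2 / (2 * σ)))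
      (Set.mem_univ (b * ‖ξ‖ / 2 - ‖ξ‖ ^ 2 / (2 * σ))) hta htb hab
    simp only [smul_eq_mul] at hexp
    have h1 : F (ta * a + tb * b) ξ ≤ ta * F a ξ + tb * F b ξ := by
      simp only [hFdef]
      rw [hx]
      calc ‖ξ‖ ^ p * Real.exp (ta * (a * ‖ξ‖ / 2 - ‖ξ‖ ^ 2 / (2 * σ)) +
              tb * (b * ‖ξ‖ / 2 - ‖ξ‖ ^ 2 / (2 * σ)))
          ≤ ‖ξ‖ ^ p * (ta * Real.exp (a * ‖ξ‖ / 2 - ‖ξ‖ ^ 2 / (2 * σ)) +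
              tb * Real.exp (b * ‖ξ‖ / 2 - ‖ξ‖ ^ 2 / (2 * σ))) :=
            mul_le_mul_of_nonneg_left hexp (by positivity)
        _ = ta * (‖ξ‖ ^ p * Real.exp (a * ‖ξ‖ / 2 - ‖ξ‖ ^ 2 / (2 * σ))) +
              tb * (‖ξ‖ ^ p * Real.exp (b * ‖ξ‖ / 2 - ‖ξ‖ ^ 2 / (2 * σ))) := by ring
    have h2 : F a ξ ≤ ⨆ η, F a η := le_ciSup (hbdd a) ξ
    have h3 : F b ξ ≤ ⨆ η, F b η := le_ciSup (hbdd b) ξ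
    calc F (ta * a + tb * b) ξ ≤ ta * F a ξ + tb * F b ξ := h1
      _ ≤ ta * (⨆ η, F a η) + tb * (⨆ η, F b η) := by
          gcongr <;> assumption
  have hScont : Continuous S := by
    exact continuousOn_univ.1 (hSconv.continuousOn isOpen_univ)
  have hc₁pos : 0 < c₁ := by rw [hc₁]; positivity
  -- monotonicity on [c₁, ∞)
  have hmono : MonotoneOn MN (Set.Ici c₁) := by
    intro a ha b hb hab
    simp only [Set.mem_Ici] at ha hb
    rw [hMN2 a ha, hMN2 b hb]
    have hP : 0 ≤ (1 + (lam : ℝ) - n) / 4 := by linarith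
    have h1 : a ^ ((1 + (lam : ℝ) - n) / 4) ≤ b ^ ((1 + (lam : ℝ) - n) / 4) :=
      Real.rpow_le_rpow (le_trans hc₁pos.le ha) hab hP
    have h2 : S a ≤ S b := hSmono hab
    have hSa := hSnn a
    have haP : (0:ℝ) ≤ a ^ ((1 + (lam : ℝ) - n) / 4) :=
      Real.rpow_nonneg (le_trans hc₁pos.le ha) _
    have hbP : (0:ℝ) ≤ b ^ ((1 + (lam:ℝ) - n) / 4) :=
      Real.rpow_nonneg (le_trans hc₁pos.le hb) _
    exact mul_le_mul_of_nonneg_right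
      (mul_le_mul (mul_le_mul_of_nonneg_left h1 (Real.sqrt_nonneg _)) h2 hSa
        (mul_nonneg (Real.sqrt_nonneg _) hbP))
      (Real.rpow_nonneg (by norm_num) _)
  refine ⟨hmono, ?_⟩
  have hc₀pos : 0 < c₀ := by rw [hc₀]; positivity
  have hm1 : (0 : ℝ) < (m : ℝ) + 1 := by positivity
  have hc₀c₁ : c₀ ≤ c₁ := by
    rw [hc₀, hc₁]
    rw [lt_div_iff₀ (by positivity)] at hδb
    nlinarith
  -- continuity of MN on [c₀, c₁]
  have hg : ContinuousOn (fun c => Real.sqrt (8 * ρ) * c ^ (((lam : ℝ) - n - 1) / 4) * S c *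
      ((2 : ℝ) / 3) ^ (c / (24 * ρ * δ))) (Set.Icc c₀ c₁) := by
    refine ContinuousOn.mul (ContinuousOn.mul (ContinuousOn.mul continuousOn_const ?_)
      hScont.continuousOn) ?_
    · intro x hx
      exact (Real.continuousAt_rpow_const x _
        (Or.inl (ne_of_gt (lt_of_lt_of_le hc₀pos hx.1)))).continuousWithinAt
    · exact (Continuous.rpow continuous_const (by continuity)
        (fun x => Or.inl (by norm_num))).continuousOn
  have hMNcont : ContinuousOn MN (Set.Icc c₀ c₁) :=
    hg.congr fun x hx => hMN1 x (lt_of_lt_of_le hc₀pos hx.1) hx.2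
  obtain ⟨cstar, hcst, hmin⟩ := isCompact_Icc.exists_isMinOn
    ⟨c₀, Set.left_mem_Icc.2 hc₀c₁⟩ hMNcont
  refine ⟨cstar, hcst, fun c hc => ?_⟩
  rw [Set.mem_Ici] at hc
  by_cases h : c ≤ c₁
  · exact hmin ⟨hc, h⟩
  · push_neg at h
    calc MN cstar ≤ MN c₁ := hmin (Set.right_mem_Icc.2 hc₀c₁)
      _ ≤ MN c := hmono (Set.self_mem_Ici) (Set.mem_Ici.2 h.le) h.le
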